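/- If a probability measure μ on ℝ^d belongs to M_ρ for some ρ > 0 (i.e., its two-sided Laplace transform u ↦ ∫ exp(uᵀx) dμ(x) is bounded by A·exp(B‖u‖^ρ) for some constants A, B > 0) and μ is not the Dirac mass at 0, then ρ ≥ 1. -/

import Mathlib

open MeasureTheory Real Filter
open scoped ENNReal

/-- If a probability measure `μ` on `ℝ^d` belongs to `M_ρ` for some `ρ > 0` (its two-sided
Laplace transform is everywhere defined and bounded by `A * exp (B * ‖u‖ ^ ρ)`) and `μ` is not
the Dirac mass at `0`, then `ρ ≥ 1`. -/
theorem stmt0 (d : ℕ) (μ : Measure (EuclideanSpace ℝ (Fin d))) [IsProbabilityMeasure μ]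
    (ρ : ℝ) (hρ : 0 < ρ)
    (hint : ∀ u : EuclideanSpace ℝ (Fin d),
      Integrable (fun x => Real.exp ((inner ℝ u x : ℝ))) μ)
    (hbound : ∃ A B : ℝ, 0 < A ∧ 0 < B ∧ ∀ u : EuclideanSpace ℝ (Fin d),
      (∫ x, Real.exp ((inner ℝ u x : ℝ)) ∂μ) ≤ A * Real.exp (B * ‖u‖ ^ ρ))
    (hμ : μ ≠ Measure.dirac 0) :
    1 ≤ ρ := by
  by_contra hlt
  push_neg at hlt
  obtain ⟨A, B, hA, hB, hbd⟩ := hbound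
  -- Step 1: for each `u` and `ε > 0`, the set where `⟪u, x⟫ ≥ ε` is null.
  have hε0 : ∀ (u : EuclideanSpace ℝ (Fin d)) (ε : ℝ), 0 < ε →
      μ {x | ε ≤ (inner ℝ u x : ℝ)} = 0 := by
    intro u ε hε
    set C : ℝ := B * ‖u‖ ^ ρ with hC
    have hC0 : 0 ≤ C := mul_nonneg hB.le (rpow_nonneg (norm_nonneg u) ρ)
    -- Chernoff bound for each s ≥ 0
    have hcher : ∀ s : ℝ, 0 ≤ s →
        (μ {x | ε ≤ (inner ℝ u x : ℝ)}).toReal ≤ A * exp (C * s ^ ρ - s * ε) := by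
      intro s hs
      have hint' : Integrable (fun x => exp (s * (inner ℝ u x : ℝ))) μ := by
        have he : (fun x : EuclideanSpace ℝ (Fin d) => exp ((inner ℝ (s • u) x : ℝ))) =
            fun x => exp (s * (inner ℝ u x : ℝ)) := by
          funext x; rw [real_inner_smul_left]
        rw [← he]; exact hint (s • u)
      have h1 := ProbabilityTheory.measure_ge_le_exp_mul_mgf
        (X := fun x => (inner ℝ u x : ℝ)) (μ := μ) ε hs hint'
      refine h1.trans ?_
      have hm : ProbabilityTheory.mgf (fun x => (inner ℝ u x : ℝ)) μ s ≤ A * exp (C * s ^ ρ) := by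
        have h2 := hbd (s • u)
        have he : (fun x => exp ((inner ℝ (s • u) x : ℝ))) =
            fun x => exp (s * (inner ℝ u x : ℝ)) := by
          funext x; rw [real_inner_smul_left]
        rw [he] at h2
        refine le_trans h2 ?_
        have hnorm : ‖s • u‖ ^ ρ = s ^ ρ * ‖u‖ ^ ρ := by
          rw [norm_smul, Real.norm_eq_abs, abs_of_nonneg hs,
            Real.mul_rpow hs (norm_nonneg u)]
        rw [hnorm]
        have : B * (s ^ ρ * ‖u‖ ^ ρ) = C * s ^ ρ := by ring
        rw [this]
      calc exp (-s * ε) * ProbabilityTheory.mgf (fun x => (inner ℝ u x : ℝ)) μ s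
          ≤ exp (-s * ε) * (A * exp (C * s ^ ρ)) := by
            exact mul_le_mul_of_nonneg_left hm (exp_pos _).le
        _ = A * exp (C * s ^ ρ - s * ε) := by
            rw [mul_comm (exp (-s * ε)), mul_assoc, ← exp_add]
            congr 1; ring_nf
    -- the right hand side tends to 0
    have htend : Tendsto (fun s : ℝ => A * exp (C * s ^ ρ - s * ε)) atTop (nhds 0) := by
      have harg : Tendsto (fun s : ℝ => C * s ^ ρ - s * ε) atTop atBot := by
        have h1 : Tendsto (fun s : ℝ => s * (C * s ^ (ρ - 1) - ε)) atTop atBot := by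
          have h2 : Tendsto (fun s : ℝ => C * s ^ (ρ - 1) - ε) atTop (nhds (C * 0 - ε)) := by
            exact (((tendsto_rpow_neg_atTop (by linarith : 0 < 1 - ρ)).congr
              (fun s => by rw [neg_sub])).const_mul C).sub_const ε
        -- `C * 0 - ε = -ε < 0`
          have h3 : C * 0 - ε < 0 := by simp [hε]
          exact Filter.Tendsto.atTop_mul_neg h3 tendsto_id h2
        refine h1.congr' ?_
        filter_upwards [eventually_gt_atTop (0 : ℝ)] with s hs
        have : s * s ^ (ρ - 1) = s ^ ρ := by
          rw [← Real.rpow_one_add' hs.le (by intro h; linarith [hρ] )]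
          ring_nf
        calc s * (C * s ^ (ρ - 1) - ε) = C * (s * s ^ (ρ - 1)) - s * ε := by ring
          _ = C * s ^ ρ - s * ε := by rw [this]
      have := (Real.tendsto_exp_atBot.comp harg).const_mul A
      simpa using this
    have hle : (μ {x | ε ≤ (inner ℝ u x : ℝ)}).toReal ≤ 0 := by
      refine ge_of_tendsto htend ?_
      filter_upwards [eventually_ge_atTop (0 : ℝ)] with s hs using hcher s hs
    have hfin : μ {x | ε ≤ (inner ℝ u x : ℝ)} ≠ ⊤ := measure_ne_top μ _
    have := le_antisymm hle ENNReal.toReal_nonneg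
    rwa [ENNReal.toReal_eq_zero_iff, or_iff_left hfin] at this
  -- Step 2: for each `u`, `⟪u, x⟫ ≤ 0` a.e., hence `⟪u, x⟫ = 0` a.e.
  have hpos : ∀ u : EuclideanSpace ℝ (Fin d), μ {x | 0 < (inner ℝ u x : ℝ)} = 0 := by
    intro u
    have hsub : {x : EuclideanSpace ℝ (Fin d) | 0 < (inner ℝ u x : ℝ)} ⊆
        ⋃ n : ℕ, {x | 1 / (n + 1 : ℝ) ≤ (inner ℝ u x : ℝ)} := by
      intro x hx
      simp only [Set.mem_setOf_eq] at hx
      obtain ⟨n, hn⟩ := exists_nat_one_div_lt hx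
      exact Set.mem_iUnion.2 ⟨n, hn.le⟩
    refine measure_mono_null hsub (measure_iUnion_null fun n => ?_)
    exact hε0 u _ (by positivity)
  have hzero : ∀ u : EuclideanSpace ℝ (Fin d), ∀ᵐ x ∂μ, (inner ℝ u x : ℝ) = 0 := by
    intro u
    have h1 := hpos u
    have h2 := hpos (-u)
    have hsub : {x : EuclideanSpace ℝ (Fin d) | (inner ℝ u x : ℝ) ≠ 0} ⊆
        {x | 0 < (inner ℝ u x : ℝ)} ∪ {x | 0 < (inner ℝ (-u) x : ℝ)} := by
      intro x hx
      rcases lt_or_gt_of_ne hx with h | h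
      · right; simp only [inner_neg_left, Set.mem_setOf_eq]; linarith
      · left; exact h
    have : μ {x | (inner ℝ u x : ℝ) ≠ 0} = 0 :=
      measure_mono_null hsub (measure_union_null h1 h2)
    exact this
  -- Step 3: a.e. x = 0
  have hae : ∀ᵐ x ∂μ, x = 0 := by
    have h : ∀ᵐ x ∂μ, ∀ i : Fin d, (inner ℝ (EuclideanSpace.single i (1:ℝ)) x : ℝ) = 0 :=
      (ae_all_iff).2 fun i => hzero (EuclideanSpace.single i (1:ℝ))
    filter_upwards [h] with x hx
    ext i
    have := hx i
    rwa [EuclideanSpace.inner_single_left, map_one, one_mul] at this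
  -- Step 4: μ = dirac 0, contradiction
  apply hμ
  have h0c : μ {(0 : EuclideanSpace ℝ (Fin d))}ᶜ = 0 := by
    have h := ae_iff.1 hae
    have : ({(0 : EuclideanSpace ℝ (Fin d))}ᶜ : Set _) = {x | ¬ x = 0} := by
      ext x; simp
    rw [this]; exact h
  have h01 : μ {(0 : EuclideanSpace ℝ (Fin d))} = 1 :=
    (prob_compl_eq_zero_iff (measurableSet_singleton 0)).1 h0c
  ext s hs
  rw [Measure.dirac_apply' _ hs]
  by_cases h0s : (0 : EuclideanSpace ℝ (Fin d)) ∈ s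
  · have hle1 : μ s ≤ 1 := prob_le_one
    have hge : (1 : ℝ≥0∞) ≤ μ s := h01 ▸ measure_mono (Set.singleton_subset_iff.2 h0s)
    rw [le_antisymm hle1 hge]
    simp [Set.indicator_of_mem h0s]
  · have : s ⊆ {(0 : EuclideanSpace ℝ (Fin d))}ᶜ := fun x hx => by
      simp only [Set.mem_compl_iff, Set.mem_singleton_iff]
      rintro rfl; exact h0s hx
    rw [measure_mono_null this h0c]
    simp [Set.indicator_of_notMem h0s]
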